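/- Let q be a power of an odd prime, n a positive integer, and write q^n - 1 = l·s for positive integers l, s. Let f be a polynomial over F_{q^n}, let r₁ be a positive integer, and let S : F_{q^n} → F_{q^n} be the map S(x) = x^{q^{r₁}}·f(x^{s·q^{r₁}}). Suppose S is scattered of index t over F_{q^n} for some 0 ≤ t ≤ n-1. Then for all nonzero y, z ∈ F_{q^n} satisfying S(y)·z^{q^t} = S(z)·y^{q^t}, one has f(y^{s·q^{r₁}}) = f(z^{s·q^{r₁}}). -/

import Mathlib

/-- A map `S : L → L` on the field `L = F_{q^n}` is scattered of index `t` over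
`F_{q^n}/F_q` if for all nonzero `y, z`, `S(y)/y^{q^t} = S(z)/z^{q^t}` implies
`y/z ∈ F_q`.  Here membership of `y/z` in the subfield `F_q` is expressed by its
characterization as the fixed field of the `q`-power Frobenius: `(y/z)^q = y/z`. -/
def IsScattered (q t : ℕ) {L : Type} [Field L] (S : L → L) : Prop :=
  ∀ y z : L, y ≠ 0 → z ≠ 0 → S y * z ^ q ^ t = S z * y ^ q ^ t → (y / z) ^ q = y / z

/-- Let q be a power of an odd prime, n a positive integer,
q^n - 1 = l·s, f a polynomial over F_{q^n}, r₁ a positive integer, and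
S(x) = x^{q^{r₁}}·f(x^{s·q^{r₁}}).  If S is scattered of index t (0 ≤ t ≤ n-1),
then for all nonzero y, z with S(y)·z^{q^t} = S(z)·y^{q^t} one has
f(y^{s·q^{r₁}}) = f(z^{s·q^{r₁}}). -/
theorem stmt2 (q n l s : ℕ)
    (hq : ∃ p m : ℕ, p.Prime ∧ Odd p ∧ 0 < m ∧ q = p ^ m)
    (hn : 0 < n) (hl : 0 < l) (hs : 0 < s) (hls : q ^ n - 1 = l * s)
    (L : Type) [Field L] [Fintype L] (hcard : Fintype.card L = q ^ n)
    (f : Polynomial L) (r₁ : ℕ) (hr₁ : 0 < r₁)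
    (t : ℕ) (ht : t ≤ n - 1)
    (hS : IsScattered q t
      (fun x : L => x ^ q ^ r₁ * Polynomial.eval (x ^ (s * q ^ r₁)) f)) :
    ∀ y z : L, y ≠ 0 → z ≠ 0 →
      (y ^ q ^ r₁ * Polynomial.eval (y ^ (s * q ^ r₁)) f) * z ^ q ^ t
        = (z ^ q ^ r₁ * Polynomial.eval (z ^ (s * q ^ r₁)) f) * y ^ q ^ t →
      Polynomial.eval (y ^ (s * q ^ r₁)) f = Polynomial.eval (z ^ (s * q ^ r₁)) f := by
  intro y z hy hz heq
  have hc : (y / z) ^ q = y / z := hS y z hy hz heq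
  set c := y / z with hcdef
  have hc0 : c ≠ 0 := div_ne_zero hy hz
  have hyz : y = c * z := by rw [hcdef]; exact (div_mul_cancel₀ y hz).symm
  have hck : ∀ k, c ^ q ^ k = c := by
    intro k
    induction k with
    | zero => simp
    | succ k ih => rw [pow_succ, pow_mul, ih, hc]
  have h1 : y ^ q ^ r₁ = c * z ^ q ^ r₁ := by rw [hyz, mul_pow, hck]
  have h2 : y ^ q ^ t = c * z ^ q ^ t := by rw [hyz, mul_pow, hck]
  rw [h1, h2] at heq
  have hz1 : z ^ q ^ r₁ ≠ 0 := pow_ne_zero _ hz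
  have hz2 : z ^ q ^ t ≠ 0 := pow_ne_zero _ hz
  apply mul_left_cancel₀ (mul_ne_zero (mul_ne_zero hc0 hz1) hz2)
  linear_combination heq
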